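/- For a finite dimensional associative algebra A over a field k and a two-sided ideal I of A, the length of A equals the length of I plus the length of A/I: l(A) = l(I) + l(A/I). -/

import Mathlib

def IsUnrefinableChain (k : Type*) (A : Type*) [Field k] [NonUnitalRing A]
    [Module k A] [SMulCommClass k A A] [IsScalarTower k A A] (t : ℕ) : Prop :=
  ∃ f : ℕ → NonUnitalSubalgebra k A, f 0 = ⊥ ∧ f t = ⊤ ∧ ∀ i < t, f i ⋖ f (i + 1)

/-- The length of a finite dimensional algebra: the supremum of the lengths of
unrefinable chains of subalgebras. -/
noncomputable def algLength (k : Type*) (A : Type*) [Field k] [NonUnitalRing A]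
    [Module k A] [SMulCommClass k A A] [IsScalarTower k A A] : ℕ :=
  sSup {t | IsUnrefinableChain k A t}

/-! ### Generic chain machinery -/

section Chains

/-- A chain of covers from `B` to `C` of length `t` in a partial order. -/
def RelChain {α : Type*} [PartialOrder α] (B C : α) (t : ℕ) : Prop :=
  ∃ f : ℕ → α, f 0 = B ∧ f t = C ∧ ∀ i < t, f i ⋖ f (i + 1)

variable {α : Type*} [PartialOrder α]

lemma chain_le {f : ℕ → α} {t : ℕ} (h : ∀ i < t, f i ⋖ f (i + 1))
    {i j : ℕ} (hij : i ≤ j) (hj : j ≤ t) : f i ≤ f j := by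
  induction j with
  | zero => simp [Nat.le_zero.mp hij]
  | succ n ih =>
    rcases Nat.lt_or_ge i (n + 1) with hlt | hge
    · exact (ih (Nat.lt_succ_iff.mp hlt) (le_trans (Nat.le_succ n) hj)).trans
        (h n (by omega)).le
    · have : i = n + 1 := le_antisymm hij hge
      simp [this]

lemma RelChain.le {B C : α} {t : ℕ} (h : RelChain B C t) : B ≤ C := by
  obtain ⟨f, h0, ht, hcov⟩ := h
  simpa [h0, ht] using chain_le hcov (Nat.zero_le t) le_rfl

lemma RelChain.eq_of_zero {B C : α} (h : RelChain B C 0) : B = C := by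
  obtain ⟨f, h0, ht, -⟩ := h; rw [← h0, ht]

lemma relChain_refl (B : α) : RelChain B B 0 :=
  ⟨fun _ => B, rfl, rfl, by omega⟩

lemma relChain_single {B C : α} (h : B ⋖ C) : RelChain B C 1 := by
  refine ⟨fun i => if i = 0 then B else C, by simp, by simp, ?_⟩
  intro i hi
  interval_cases i
  simpa using h

lemma RelChain.trans {B C D : α} {s t : ℕ} (h1 : RelChain B C s) (h2 : RelChain C D t) :
    RelChain B D (s + t) := by
  obtain ⟨f, hf0, hfs, hfcov⟩ := h1
  obtain ⟨g, hg0, hgt, hgcov⟩ := h2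
  refine ⟨fun i => if i < s then f i else g (i - s), ?_, ?_, ?_⟩
  · by_cases hs : 0 < s
    · simp [hs, hf0]
    · have hs0 : s = 0 := by omega
      have hBC : B = C := by rw [← hf0]; rw [hs0] at hfs; exact hfs
      simp [hs0, hg0, ← hBC]
  · have : ¬ s + t < s := by omega
    simp [this, hgt]
  · intro i hi
    rcases Nat.lt_or_ge (i + 1) s with h1' | h1'
    · have : i < s := by omega
      simpa [this, h1'] using hfcov i this
    · rcases Nat.lt_or_ge i s with h2' | h2'
      · have hs : i + 1 = s := by omega
        have : ¬ i + 1 < s := by omega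
        have hC : g (i + 1 - s) = f s := by rw [hs]; simp [hg0, ← hfs]
        have hcv := hfcov i h2'
        rw [hs] at hcv
        simp only [h2', if_pos, this, if_neg, hC]
        exact hcv
      · have h3 : ¬ i < s := by omega
        have h4 : ¬ i + 1 < s := by omega
        have h5 : i + 1 - s = (i - s) + 1 := by omega
        simp only [h3, h4, if_neg, h5]
        exact hgcov (i - s) (by omega)

lemma RelChain.cons {B C D : α} {t : ℕ} (h : B ⋖ C) (h2 : RelChain C D t) :
    RelChain B D (1 + t) :=
  (relChain_single h).trans h2

/-- Transfer a chain along a map that sends covers (within the chain's range) to covers. -/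
lemma RelChain.map {β : Type*} [PartialOrder β] {B C : α} {t : ℕ}
    (h : RelChain B C t) (φ : α → β)
    (hcov : ∀ X Y : α, B ≤ X → Y ≤ C → X ⋖ Y → φ X ⋖ φ Y) :
    RelChain (φ B) (φ C) t := by
  obtain ⟨f, h0, ht, hcovs⟩ := h
  refine ⟨fun i => φ (f i), by simp only [h0], by simp only [ht], ?_⟩
  intro i hi
  exact hcov (f i) (f (i + 1)) (h0 ▸ chain_le hcovs (Nat.zero_le i) (by omega))
    (ht ▸ chain_le hcovs (by omega) le_rfl) (hcovs i hi)

/-- Transfer covers along a pair of monotone maps that are inverse on the relevant region. -/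
lemma covBy_transfer {β : Type*} [PartialOrder β] {φ : α → β} {ψ : β → α}
    (hφ : Monotone φ) (hψ : Monotone ψ) {x y : α} (hxy : x ⋖ y)
    (hx : ψ (φ x) = x) (hy : ψ (φ y) = y)
    (hmid : ∀ z, φ x ≤ z → z ≤ φ y → φ (ψ z) = z) : φ x ⋖ φ y := by
  have hlt : φ x < φ y := by
    refine lt_of_le_of_ne (hφ hxy.le) fun he => hxy.lt.ne ?_
    rw [← hx, ← hy, he]
  refine ⟨hlt, fun z hz1 hz2 => ?_⟩
  have h1 : x ≤ ψ z := hx ▸ hψ hz1.le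
  have h2 : ψ z ≤ y := hy ▸ hψ hz2.le
  rcases (hxy.wcovBy.eq_or_eq h1 h2) with he | he
  · refine absurd (hmid z hz1.le hz2.le) ?_
    rw [he]
    exact fun hc => hz1.ne' hc.symm
  · refine absurd (hmid z hz1.le hz2.le) ?_
    rw [he]
    exact fun hc => hz2.ne hc.symm

end Chains
/-! ### The subalgebra lattice of a finite dimensional algebra -/

section Alg

variable {k A : Type*} [Field k] [NonUnitalRing A] [Module k A]
  [SMulCommClass k A A] [IsScalarTower k A A]

lemma toSubmodule_lt {X Y : NonUnitalSubalgebra k A} (h : X < Y) :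
    X.toSubmodule < Y.toSubmodule := by
  refine lt_of_le_of_ne (fun x hx => ?_) fun he => h.ne (NonUnitalSubalgebra.toSubmodule_injective he)
  exact h.le hx

variable [FiniteDimensional k A]

lemma relChain_le_finrank {B C : NonUnitalSubalgebra k A} {t : ℕ} (h : RelChain B C t) :
    t ≤ Module.finrank k A := by
  obtain ⟨f, h0, ht, hcov⟩ := h
  have key : ∀ i ≤ t, i ≤ Module.finrank k (f i).toSubmodule := by
    intro i hi
    induction i with
    | zero => exact Nat.zero_le _
    | succ n ih =>
      have h1 : n ≤ Module.finrank k (f n).toSubmodule := ih (by omega)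
      have h2 : Module.finrank k (f n).toSubmodule < Module.finrank k (f (n + 1)).toSubmodule :=
        Submodule.finrank_lt_finrank_of_lt (toSubmodule_lt (hcov n (by omega)).lt)
      omega
  exact le_trans (key t le_rfl) (Submodule.finrank_le _)

lemma exists_relChain_aux : ∀ n : ℕ, ∀ B C : NonUnitalSubalgebra k A, B ≤ C →
    Module.finrank k C.toSubmodule ≤ Module.finrank k B.toSubmodule + n →
    ∃ t, RelChain B C t := by
  intro n
  induction n with
  | zero =>
    intro B C hBC hrank
    have : B.toSubmodule = C.toSubmodule :=
      Submodule.eq_of_le_of_finrank_le (fun x hx => hBC hx) (by omega)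
    have : B = C := NonUnitalSubalgebra.toSubmodule_injective this
    exact ⟨0, this ▸ relChain_refl B⟩
  | succ n ih =>
    intro B C hBC hrank
    rcases eq_or_lt_of_le hBC with he | hlt
    · exact ⟨0, he ▸ relChain_refl B⟩
    · -- pick an element of minimal finrank strictly above B and below C
      set s : Set ℕ := {m | ∃ D : NonUnitalSubalgebra k A,
        (B < D ∧ D ≤ C) ∧ Module.finrank k D.toSubmodule = m} with hs
      have hsne : s.Nonempty := ⟨_, C, ⟨hlt, le_rfl⟩, rfl⟩
      obtain ⟨D, ⟨hBD, hDC⟩, hDrank⟩ := Nat.sInf_mem hsne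
      have hcov : B ⋖ D := by
        refine ⟨hBD, fun E hBE hED => ?_⟩
        have hmem : Module.finrank k E.toSubmodule ∈ s := ⟨E, ⟨hBE, hED.le.trans hDC⟩, rfl⟩
        have h1 := Nat.sInf_le hmem
        have h2 : Module.finrank k E.toSubmodule < Module.finrank k D.toSubmodule :=
          Submodule.finrank_lt_finrank_of_lt (toSubmodule_lt hED)
        omega
      have hBDrank : Module.finrank k B.toSubmodule < Module.finrank k D.toSubmodule :=
        Submodule.finrank_lt_finrank_of_lt (toSubmodule_lt hBD)
      obtain ⟨t, hchain⟩ := ih D C hDC (by omega)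
      exact ⟨1 + t, RelChain.cons hcov hchain⟩

lemma exists_relChain {B C : NonUnitalSubalgebra k A} (hBC : B ≤ C) : ∃ t, RelChain B C t :=
  exists_relChain_aux (Module.finrank k A) B C hBC
    (le_trans (Submodule.finrank_le _) (Nat.le_add_left _ _))

/-- The maximal length of a chain of covers from `B` to `C`. -/
noncomputable def relLength (B C : NonUnitalSubalgebra k A) : ℕ :=
  sSup {t | RelChain B C t}

lemma relChain_bddAbove (B C : NonUnitalSubalgebra k A) : BddAbove {t | RelChain B C t} :=
  ⟨Module.finrank k A, fun _ ht => relChain_le_finrank ht⟩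

lemma le_relLength {B C : NonUnitalSubalgebra k A} {t : ℕ} (h : RelChain B C t) :
    t ≤ relLength B C :=
  le_csSup (relChain_bddAbove B C) h

lemma relChain_relLength {B C : NonUnitalSubalgebra k A} (hBC : B ≤ C) :
    RelChain B C (relLength B C) := by
  obtain ⟨t, ht⟩ := exists_relChain hBC
  exact Nat.sSup_mem (⟨t, ht⟩ : Set.Nonempty {t | RelChain B C t}) (relChain_bddAbove B C)

lemma relLength_add_le {B C D : NonUnitalSubalgebra k A} (h1 : B ≤ C) (h2 : C ≤ D) :
    relLength B C + relLength C D ≤ relLength B D :=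
  le_relLength ((relChain_relLength h1).trans (relChain_relLength h2))

lemma one_le_relLength {B C : NonUnitalSubalgebra k A} (h : B < C) : 1 ≤ relLength B C := by
  obtain ⟨t, ht⟩ := exists_relChain h.le
  have : t ≠ 0 := fun h0 => h.ne (h0 ▸ ht).eq_of_zero
  exact le_trans (by omega) (le_relLength ht)

end Alg
/-! ### Sups with an ideal, and the key inequality -/

section Ideal

variable {k A : Type*} [Field k] [NonUnitalRing A] [Module k A]
  [SMulCommClass k A A] [IsScalarTower k A A]

variable {B N : NonUnitalSubalgebra k A}

/-- If `N` is an ideal of `B` and `X ≤ B`, then `X ⊔ N` is just the additive span. -/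
lemma mem_sup_ideal (hNB : N ≤ B)
    (hid : ∀ x ∈ B, ∀ n ∈ N, x * n ∈ N ∧ n * x ∈ N)
    {X : NonUnitalSubalgebra k A} (hXB : X ≤ B) {z : A} :
    z ∈ X ⊔ N ↔ ∃ x ∈ X, ∃ n ∈ N, x + n = z := by
  set P : Submodule k A := X.toSubmodule ⊔ N.toSubmodule with hP
  have hmul : ∀ a b, a ∈ P → b ∈ P → a * b ∈ P := by
    intro a b ha hb
    obtain ⟨x, hx, n, hn, rfl⟩ := Submodule.mem_sup.mp ha
    obtain ⟨x', hx', n', hn', rfl⟩ := Submodule.mem_sup.mp hb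
    have h1 : x * x' ∈ X := mul_mem hx hx'
    have h2 : x * n' ∈ N := (hid x (hXB hx) n' hn').1
    have h3 : n * x' ∈ N := (hid x' (hXB hx') n hn).2
    have h4 : n * n' ∈ N := (hid n (hNB hn) n' hn').1
    have : (x + n) * (x' + n') = x * x' + (x * n' + n * x' + n * n') := by
      rw [add_mul, mul_add, mul_add]; abel
    rw [this]
    exact Submodule.add_mem _ (Submodule.mem_sup_left h1)
      (Submodule.mem_sup_right (add_mem (add_mem h2 h3) h4))
  have hPX : X ⊔ N = P.toNonUnitalSubalgebra hmul := by
    apply le_antisymm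
    · apply sup_le
      · exact fun x hx => Submodule.mem_sup_left hx
      · exact fun n hn => Submodule.mem_sup_right hn
    · intro z hz
      obtain ⟨x, hx, n, hn, rfl⟩ := Submodule.mem_sup.mp hz
      exact add_mem (le_sup_left (a := X) (b := N) hx) (le_sup_right (a := X) (b := N) hn)
  rw [hPX]
  exact Submodule.mem_sup (p := X.toSubmodule) (p' := N.toSubmodule)

lemma covBy_sup_ideal (hNB : N ≤ B)
    (hid : ∀ x ∈ B, ∀ n ∈ N, x * n ∈ N ∧ n * x ∈ N)
    {X Y : NonUnitalSubalgebra k A} (hYB : Y ≤ B) (hXY : X ⋖ Y) (hYNX : Y ⊓ N ≤ X) :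
    X ⊔ N ⋖ Y ⊔ N := by
  have hXB : X ≤ B := hXY.le.trans hYB
  have hlt : X ⊔ N < Y ⊔ N := by
    refine lt_of_le_of_ne (sup_le_sup_right hXY.le N) fun he => hXY.lt.ne ?_
    refine le_antisymm hXY.le fun y hy => ?_
    have : y ∈ X ⊔ N := he ▸ le_sup_left (a := Y) (b := N) hy
    obtain ⟨x, hx, n, hn, rfl⟩ := (mem_sup_ideal hNB hid hXB).mp this
    have hnY : n ∈ Y := by
      have : (x + n) - x ∈ Y := sub_mem hy (hXY.le hx)
      simpa using this
    exact add_mem hx (hYNX ⟨hnY, hn⟩)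
  refine ⟨hlt, fun D hD1 hD2 => ?_⟩
  have hXD : X ≤ D := le_trans (le_sup_left (a := X) (b := N)) hD1.le
  have hND : N ≤ D := le_trans (le_sup_right (a := X) (b := N)) hD1.le
  have hDeq : D = (D ⊓ Y) ⊔ N := by
    apply le_antisymm
    · intro d hd
      obtain ⟨y, hy, n, hn, rfl⟩ := (mem_sup_ideal hNB hid hYB).mp (hD2.le hd)
      have hyD : y ∈ D := by
        have : (y + n) - n ∈ D := sub_mem hd (hND hn)
        simpa using this
      exact (mem_sup_ideal hNB hid (le_trans inf_le_right hYB)).mpr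
        ⟨y, ⟨hyD, hy⟩, n, hn, rfl⟩
    · exact sup_le (le_trans inf_le_left le_rfl) hND
  have hXDY : X ≤ D ⊓ Y := le_inf hXD hXY.le
  rcases hXY.wcovBy.eq_or_eq hXDY inf_le_right with he | he
  · exact hD1.ne' (by rw [hDeq, he])
  · exact hD2.ne (by rw [hDeq, he])

variable [FiniteDimensional k A]

/-- The key inequality: a chain from `⊥` to `B` is no longer than the longest chain from `⊥`
to `B ⊓ I` plus the longest chain from `B ⊓ I` to `B`, when `I` is an ideal of `A`. -/
lemma main_ineq {I : NonUnitalSubalgebra k A}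
    (hIdeal : ∀ x : A, ∀ a ∈ I, x * a ∈ I ∧ a * x ∈ I) :
    ∀ t : ℕ, ∀ B : NonUnitalSubalgebra k A, RelChain ⊥ B t →
      t ≤ relLength ⊥ (B ⊓ I) + relLength (B ⊓ I) B := by
  intro t
  induction t with
  | zero => intro B _; exact Nat.zero_le _
  | succ t ih =>
    intro B hchain
    obtain ⟨f, h0, ht, hcov⟩ := hchain
    set M := f t with hM
    have hMB : M ⋖ B := ht ▸ hcov t (by omega)
    have hchainM : RelChain ⊥ M t := ⟨f, h0, rfl, fun i hi => hcov i (by omega)⟩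
    have IH := ih M hchainM
    set N := B ⊓ I with hN
    have hNB : N ≤ B := inf_le_left
    have hid : ∀ x ∈ B, ∀ n ∈ N, x * n ∈ N ∧ n * x ∈ N := by
      intro x hx n hn
      exact ⟨⟨mul_mem hx hn.1, (hIdeal x n hn.2).1⟩, ⟨mul_mem hn.1 hx, (hIdeal x n hn.2).2⟩⟩
    have hMIN : M ⊓ I ≤ N := inf_le_inf_right I hMB.le
    by_cases hcase : N ≤ M
    · have hMI : M ⊓ I = N := le_antisymm hMIN (le_inf hcase inf_le_right)
      rw [hMI] at IH
      have h2 : relLength N M + relLength M B ≤ relLength N B :=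
        relLength_add_le hcase hMB.le
      have h3 : 1 ≤ relLength M B := one_le_relLength hMB.lt
      omega
    · have hMNlt : M ⊓ I < N := lt_of_le_of_ne hMIN fun he => hcase (he ▸ inf_le_left)
      have h1 : relLength ⊥ (M ⊓ I) + 1 ≤ relLength ⊥ N := by
        have := relLength_add_le (bot_le : ⊥ ≤ M ⊓ I) hMNlt.le
        have := one_le_relLength hMNlt
        omega
      have hsupB : M ⊔ N = B := by
        rcases hMB.wcovBy.eq_or_eq le_sup_left (sup_le hMB.le hNB) with he | he
        · exact absurd (he ▸ le_sup_right : N ≤ M) hcase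
        · exact he
      have h2 : relLength (M ⊓ I) M ≤ relLength N B := by
        have hchain2 := relChain_relLength (inf_le_left : M ⊓ I ≤ M)
        have hmap := hchain2.map (fun X => X ⊔ N) ?_
        · have e1 : (M ⊓ I) ⊔ N = N := sup_eq_right.mpr hMIN
          rw [e1, hsupB] at hmap
          exact le_relLength hmap
        · intro X Y hX hY hXY
          refine covBy_sup_ideal hNB hid (hY.trans hMB.le) hXY ?_
          exact le_trans (inf_le_inf hY inf_le_right) hX
      omega

end Ideal
/-! ### Transfer between subalgebra lattices -/

section Transfer

variable {k A : Type*} [Field k] [NonUnitalRing A] [Module k A]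
  [SMulCommClass k A A] [IsScalarTower k A A]

open NonUnitalSubalgebra

section SubalgebraTransfer

variable (I : NonUnitalSubalgebra k A)

local notation "ι" => NonUnitalSubalgebraClass.subtype I

lemma map_mono' {B C : Type*} [NonUnitalRing B] [Module k B] [SMulCommClass k B B]
    [IsScalarTower k B B] [NonUnitalRing C] [Module k C] [SMulCommClass k C C]
    [IsScalarTower k C C] (g : B →ₙₐ[k] C) :
    Monotone (map g : NonUnitalSubalgebra k B → NonUnitalSubalgebra k C) := by
  intro X Y h z hz
  obtain ⟨x, hx, rfl⟩ := mem_map.mp hz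
  exact mem_map.mpr ⟨x, h hx, rfl⟩

lemma comap_mono' {B C : Type*} [NonUnitalRing B] [Module k B] [SMulCommClass k B B]
    [IsScalarTower k B B] [NonUnitalRing C] [Module k C] [SMulCommClass k C C]
    [IsScalarTower k C C] (g : B →ₙₐ[k] C) :
    Monotone (comap g : NonUnitalSubalgebra k C → NonUnitalSubalgebra k B) := by
  intro X Y h z hz
  exact (mem_comap _ _ _).mpr (h ((mem_comap _ _ _).mp hz))

lemma iota_injective : Function.Injective ι := Subtype.coe_injective

lemma comap_map_iota (X : NonUnitalSubalgebra k I) : comap ι (map ι X) = X := by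
  ext a
  rw [mem_comap, mem_map]
  exact ⟨fun ⟨b, hb, hba⟩ => (iota_injective I hba) ▸ hb, fun ha => ⟨a, ha, rfl⟩⟩

lemma map_iota_le (X : NonUnitalSubalgebra k I) : map ι X ≤ I := by
  intro z hz
  obtain ⟨x, _, rfl⟩ := mem_map.mp hz
  exact x.2

lemma map_comap_iota {D : NonUnitalSubalgebra k A} (hD : D ≤ I) : map ι (comap ι D) = D := by
  ext z
  rw [mem_map]
  constructor
  · rintro ⟨x, hx, rfl⟩; exact (mem_comap _ _ _).mp hx
  · intro hz; exact ⟨⟨z, hD hz⟩, (mem_comap _ _ _).mpr hz, rfl⟩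

lemma map_iota_bot : map ι (⊥ : NonUnitalSubalgebra k I) = ⊥ := by
  ext z
  simp only [mem_map, NonUnitalAlgebra.mem_bot]
  constructor
  · rintro ⟨x, hx, rfl⟩
    simp [hx]
  · rintro rfl
    exact ⟨0, rfl, map_zero _⟩

lemma map_iota_top : map ι (⊤ : NonUnitalSubalgebra k I) = I := by
  ext z
  rw [mem_map]
  exact ⟨fun ⟨x, _, hx⟩ => hx ▸ x.2, fun hz => ⟨⟨z, hz⟩, NonUnitalAlgebra.mem_top, rfl⟩⟩

lemma unrefinable_iff_relChain_I (t : ℕ) :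
    IsUnrefinableChain k I t ↔ RelChain (⊥ : NonUnitalSubalgebra k A) I t := by
  constructor
  · intro h
    have h' : RelChain (⊥ : NonUnitalSubalgebra k I) ⊤ t := h
    have hm := h'.map (map ι) ?_
    · rwa [map_iota_bot, map_iota_top] at hm
    · intro X Y _ _ hXY
      refine covBy_transfer (map_mono' ι) (comap_mono' ι) hXY
        (comap_map_iota I X) (comap_map_iota I Y) ?_
      intro z _ hz2
      exact map_comap_iota I (hz2.trans (map_iota_le I Y))
  · intro h
    have hm := h.map (comap ι) ?_
    · have e1 : comap ι (⊥ : NonUnitalSubalgebra k A) = ⊥ := by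
        ext x
        rw [mem_comap, NonUnitalAlgebra.mem_bot, NonUnitalAlgebra.mem_bot]
        exact ⟨fun hx => Subtype.ext hx, fun hx => by rw [hx]; exact map_zero _⟩
      have e2 : comap ι I = ⊤ := by
        ext x
        rw [mem_comap]
        exact ⟨fun _ => NonUnitalAlgebra.mem_top, fun _ => x.2⟩
      rw [e1, e2] at hm
      exact hm
    · intro X Y _ hY hXY
      refine covBy_transfer (comap_mono' ι) (map_mono' ι) hXY
        (map_comap_iota I (hXY.le.trans hY)) (map_comap_iota I hY) ?_
      intro z _ _
      exact comap_map_iota I z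

end SubalgebraTransfer

section QuotientTransfer

variable {Q : Type*} [NonUnitalRing Q] [Module k Q] [SMulCommClass k Q Q] [IsScalarTower k Q Q]
variable (I : NonUnitalSubalgebra k A) (π : A →ₙₐ[k] Q)
variable (hsurj : Function.Surjective π) (hker : ∀ x : A, π x = 0 ↔ x ∈ I)

include hsurj in
lemma map_comap_pi (X : NonUnitalSubalgebra k Q) : map π (comap π X) = X := by
  ext z
  rw [mem_map]
  constructor
  · rintro ⟨x, hx, rfl⟩; exact (mem_comap _ _ _).mp hx
  · intro hz
    obtain ⟨a, rfl⟩ := hsurj z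
    exact ⟨a, (mem_comap _ _ _).mpr hz, rfl⟩

include hker in
lemma comap_map_pi {X : NonUnitalSubalgebra k A} (hIX : I ≤ X) : comap π (map π X) = X := by
  ext x
  rw [mem_comap, mem_map]
  constructor
  · rintro ⟨b, hb, hbx⟩
    have : π (x - b) = 0 := by rw [map_sub, hbx, sub_self]
    have hxb : x - b ∈ X := hIX ((hker _).mp this)
    have := add_mem hb hxb
    simpa using this
  · intro hx; exact ⟨x, hx, rfl⟩

include hker in
lemma comap_pi_bot : comap π (⊥ : NonUnitalSubalgebra k Q) = I := by
  ext x
  rw [mem_comap, NonUnitalAlgebra.mem_bot]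
  exact hker x

lemma comap_pi_top : comap π (⊤ : NonUnitalSubalgebra k Q) = ⊤ := by
  ext x
  simp [mem_comap]

include hker in
lemma map_pi_I : map π I = ⊥ := by
  ext z
  rw [mem_map, NonUnitalAlgebra.mem_bot]
  constructor
  · rintro ⟨a, ha, rfl⟩; exact (hker a).mpr ha
  · rintro rfl; exact ⟨0, zero_mem I, map_zero π⟩

include hsurj in
lemma map_pi_top : map π (⊤ : NonUnitalSubalgebra k A) = ⊤ := by
  ext z
  constructor
  · intro _
    exact NonUnitalAlgebra.mem_top
  · intro _
    obtain ⟨a, rfl⟩ := hsurj z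
    exact mem_map.mpr ⟨a, NonUnitalAlgebra.mem_top, rfl⟩

include hsurj hker in
lemma unrefinable_iff_relChain_Q (t : ℕ) :
    IsUnrefinableChain k Q t ↔ RelChain I (⊤ : NonUnitalSubalgebra k A) t := by
  constructor
  · intro h
    have h' : RelChain (⊥ : NonUnitalSubalgebra k Q) ⊤ t := h
    have hm := h'.map (comap π) ?_
    · rwa [comap_pi_bot I π hker, comap_pi_top] at hm
    · intro X Y _ _ hXY
      refine covBy_transfer (comap_mono' π) (map_mono' π) hXY
        (map_comap_pi π hsurj X) (map_comap_pi π hsurj Y) ?_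
      intro z hz1 _
      refine comap_map_pi I π hker ?_
      refine le_trans ?_ hz1
      intro a ha
      rw [mem_comap]
      have : π a = 0 := (hker a).mpr ha
      rw [this]
      exact zero_mem X
  · intro h
    have hm := h.map (map π) ?_
    · rw [map_pi_I I π hker, map_pi_top π hsurj] at hm
      exact hm
    · intro X Y hX _ hXY
      refine covBy_transfer (map_mono' π) (comap_mono' π) hXY
        (comap_map_pi I π hker hX) (comap_map_pi I π hker (hX.trans hXY.le)) ?_
      intro z _ _
      exact map_comap_pi π hsurj z

end QuotientTransfer

end Transfer
/-- For a finite dimensional associative algebra `A` over a field `k` and a two-sided ideal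
`I` of `A` (with quotient `Q ≅ A/I`, realized by a surjective non-unital algebra
homomorphism `π : A → Q` with kernel `I`), one has `l(A) = l(I) + l(A/I)`. -/
theorem stmt4 (k A Q : Type*) [Field k] [NonUnitalRing A]
    [Module k A] [SMulCommClass k A A] [IsScalarTower k A A] [FiniteDimensional k A]
    [NonUnitalRing Q] [Module k Q] [SMulCommClass k Q Q] [IsScalarTower k Q Q]
    (I : NonUnitalSubalgebra k A)
    (hIdeal : ∀ x : A, ∀ a ∈ I, x * a ∈ I ∧ a * x ∈ I)
    (π : A →ₙₐ[k] Q) (hsurj : Function.Surjective π)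
    (hker : ∀ x : A, π x = 0 ↔ x ∈ I) :
    algLength k A = algLength k I + algLength k Q := by
  have hA : algLength k A = relLength (⊥ : NonUnitalSubalgebra k A) ⊤ := rfl
  have hI : algLength k I = relLength (⊥ : NonUnitalSubalgebra k A) I := by
    unfold algLength relLength
    congr 1
    ext t
    exact unrefinable_iff_relChain_I I t
  have hQ : algLength k Q = relLength I (⊤ : NonUnitalSubalgebra k A) := by
    unfold algLength relLength
    congr 1
    ext t
    exact unrefinable_iff_relChain_Q I π hsurj hker t
  rw [hA, hI, hQ]
  apply le_antisymm
  · refine csSup_le' ?_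
    intro t ht
    have h := main_ineq hIdeal t ⊤ ht
    rwa [top_inf_eq] at h
  · exact relLength_add_le bot_le le_top
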